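/- For all words u, v, t over a nonempty finite alphabet A: r(u·v, t) ≤ ρ(u) + r(v,t) and ℓ(t, u·v) ≤ ρ(v) + ℓ(t,u). -/

import Mathlib

/-- Simon's congruence of order `k`: `u` and `v` have the same subwords
(subsequences) of length at most `k`. -/
def SimonCong {A : Type*} (k : ℕ) (u v : List A) : Prop :=
  ∀ s : List A, s.length ≤ k → (s.Sublist u ↔ s.Sublist v)

/-- The subword distance `δ(u,v) = sup {k | u ∼ₖ v} ∈ ℕ ∪ {∞}`. -/
noncomputable def delta {A : Type*} (u v : List A) : ℕ∞ :=
  ⨆ k ∈ {k : ℕ | SimonCong k u v}, (k : ℕ∞)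

/-- Right side distance `r(u,t) = δ(u, u·t)`. -/
noncomputable def sideR {A : Type*} (u t : List A) : ℕ∞ :=
  delta u (u ++ t)

/-- Left side distance `ℓ(t,u) = δ(t·u, u)`. -/
noncomputable def sideL {A : Type*} (t u : List A) : ℕ∞ :=
  delta (t ++ u) u

/-- The piecewise complexity `h(u)`: the least `n` such that every word
`v` with `u ∼ₙ v` equals `u`. -/
noncomputable def pieceH {A : Type*} (u : List A) : ℕ :=
  sInf {n : ℕ | ∀ v : List A, SimonCong n u v → v = u}

/-- A word `u` is `m`-reduced if no strict subword of `u` is `∼ₘ`-equivalent to `u`. -/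
def MReduced {A : Type*} (m : ℕ) (u : List A) : Prop :=
  ∀ u' : List A, u'.Sublist u → u' ≠ u → ¬ SimonCong m u' u

/-- The piecewise minimality index `ρ(u)`: the least `m` such that `u` is `m`-reduced. -/
noncomputable def rho {A : Type*} (u : List A) : ℕ :=
  sInf {m : ℕ | MReduced m u}

namespace Stmt14Aux

variable {A : Type*}

lemma simonCong_rev {k : ℕ} {u v : List A} (h : SimonCong k u v) :
    SimonCong k u.reverse v.reverse := by
  intro s hs
  rw [← s.reverse_reverse]
  constructor
  · intro hh
    have := (h s.reverse (by simpa using hs)).mp (by simpa using hh.reverse)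
    simpa using this.reverse
  · intro hh
    have := (h s.reverse (by simpa using hs)).mpr (by simpa using hh.reverse)
    simpa using this.reverse

lemma delta_comm (u v : List A) : delta u v = delta v u := by
  unfold delta
  have : {k : ℕ | SimonCong k u v} = {k : ℕ | SimonCong k v u} := by
    ext k
    simp only [Set.mem_setOf_eq]
    constructor <;> (intro h s hs; exact (h s hs).symm)
  rw [this]

lemma delta_rev (u v : List A) : delta u.reverse v.reverse = delta u v := by
  unfold delta
  have : {k : ℕ | SimonCong k u.reverse v.reverse} = {k : ℕ | SimonCong k u v} := by
    ext k
    simp only [Set.mem_setOf_eq]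
    exact ⟨fun h => by simpa using simonCong_rev h, simonCong_rev⟩
  rw [this]

lemma mreduced_rev {m : ℕ} {u : List A} (h : MReduced m u) : MReduced m u.reverse := by
  intro u' hsub hne hcong
  apply h u'.reverse (by simpa using hsub.reverse)
  · intro e
    exact hne (by rw [← e, List.reverse_reverse])
  · simpa using simonCong_rev hcong

lemma rho_rev (u : List A) : rho u.reverse = rho u := by
  unfold rho
  congr 1
  ext m
  simp only [Set.mem_setOf_eq]
  exact ⟨fun h => by simpa using mreduced_rev h, mreduced_rev⟩

lemma mreduced_rho (u : List A) : MReduced (rho u) u := by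
  have hne : u.length ∈ {m : ℕ | MReduced m u} := by
    intro u' hsub hne hcong
    apply hne
    have : u.Sublist u' := (hcong u le_rfl).mpr (List.Sublist.refl u)
    exact hsub.antisymm this
  exact Nat.sInf_mem ⟨_, hne⟩

lemma exists_split_first {c : A} : ∀ {u : List A}, c ∈ u →
    ∃ w z, u = w ++ c :: z ∧ c ∉ w := by
  intro u
  induction u with
  | nil => simp
  | cons a l ih =>
    intro h
    by_cases hac : a = c
    · exact ⟨[], l, by simp [hac], by simp⟩
    · have hcl : c ∈ l := by
        rcases List.mem_cons.mp h with h' | h'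
        · exact absurd h'.symm hac
        · exact h'
      obtain ⟨w, z, h1, h2⟩ := ih hcl
      refine ⟨a :: w, z, by simp [h1], ?_⟩
      simp only [List.mem_cons, not_or]
      exact ⟨fun e => hac e.symm, h2⟩

lemma exists_split_last {c : A} {u : List A} (h : c ∈ u) :
    ∃ w z, u = w ++ c :: z ∧ c ∉ z := by
  have : c ∈ u.reverse := by simpa using h
  obtain ⟨w, z, h1, h2⟩ := exists_split_first this
  refine ⟨z.reverse, w.reverse, ?_, by simpa using h2⟩
  rw [← u.reverse_reverse, h1]
  simp

lemma claimA {c : A} {z : List A} (hz : c ∉ z) :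
    ∀ (w p : List A), (p ++ [c]).Sublist (w ++ c :: z) → p.Sublist w := by
  intro w
  induction w with
  | nil =>
    intro p h
    cases p with
    | nil => exact List.nil_sublist _
    | cons a p' =>
      exfalso
      simp only [List.nil_append, List.cons_append] at h
      cases h with
      | cons _ h' => exact hz (h'.subset (by simp))
      | cons_cons _ h' => exact hz (h'.subset (by simp))
  | cons b w' ih =>
    intro p h
    cases p with
    | nil => exact List.nil_sublist _
    | cons a p' =>
      simp only [List.cons_append] at h
      cases h with
      | cons _ h' =>
        exact ((ih (a :: p')) (by simpa using h')).cons b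
      | cons_cons _ h' =>
        exact (ih p' h').cons₂ b

lemma key {m j : ℕ} {u v t : List A} (hred : MReduced m u)
    (H : SimonCong (m + j) (u ++ v) (u ++ (v ++ t))) :
    SimonCong j v (v ++ t) := by
  intro s hs
  constructor
  · intro h
    exact h.trans (List.sublist_append_left v t)
  · intro hsvt
    by_contra hsv
    obtain ⟨c, s', rfl⟩ : ∃ c s', s = c :: s' := by
      cases s with
      | nil => exact absurd (List.nil_sublist v) hsv
      | cons c s' => exact ⟨c, s', rfl⟩
    obtain ⟨p, hp_len, hp_u, hpc⟩ :
        ∃ p : List A, p.length ≤ m ∧ p.Sublist u ∧ ¬ (p ++ [c]).Sublist u := by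
      by_cases hc : c ∈ u
      · obtain ⟨w, z, rfl, hz⟩ := exists_split_last hc
        have hsub : (w ++ z).Sublist (w ++ c :: z) :=
          (List.sublist_cons_self c z).append_left w
        have hne : (w ++ z) ≠ (w ++ c :: z) := by
          intro e
          apply_fun List.length at e
          simp at e
        have hnc := hred _ hsub hne
        unfold SimonCong at hnc
        push_neg at hnc
        obtain ⟨p, hplen, hpiff⟩ := hnc
        have hp2 : p.Sublist (w ++ c :: z) ∧ ¬ p.Sublist (w ++ z) := by
          rcases hpiff with ⟨h1, h2⟩ | ⟨h1, h2⟩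
          · exact absurd (h1.trans hsub) h2
          · exact ⟨h2, h1⟩
        refine ⟨p, hplen, hp2.1, ?_⟩
        intro hpcu
        exact hp2.2 ((claimA hz w p hpcu).trans (List.sublist_append_left w z))
      · refine ⟨[], by simp, List.nil_sublist u, ?_⟩
        intro h
        exact hc (h.subset (by simp))
    have h1 : (p ++ (c :: s')).Sublist (u ++ (v ++ t)) := hp_u.append hsvt
    have h2 : (p ++ (c :: s')).length ≤ m + j := by
      have := hs
      simp only [List.length_append, List.length_cons] at *
      omega
    have h3 : (p ++ (c :: s')).Sublist (u ++ v) := (H _ h2).mpr h1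
    rw [List.sublist_append_iff] at h3
    obtain ⟨l₁, l₂, heq, hl₁, hl₂⟩ := h3
    rw [List.append_eq_append_iff] at heq
    rcases heq with ⟨a', rfl, hs_eq⟩ | ⟨c', rfl, rfl⟩
    · cases a' with
      | nil =>
        simp only [List.nil_append] at hs_eq
        exact hsv (hs_eq ▸ hl₂)
      | cons d a'' =>
        have hd : d = c := by
          have := congrArg (·.head?) hs_eq
          simpa using this.symm
        subst hd
        have hpin : (p ++ [d]).Sublist (p ++ d :: a'') :=
          ((List.nil_sublist a'').cons₂ d).append_left p
        exact hpc (hpin.trans hl₁)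
    · exact hsv ((List.sublist_append_right c' (c :: s')).trans hl₂)

lemma sideR_append_le (u v t : List A) :
    sideR (u ++ v) t ≤ (rho u : ℕ∞) + sideR v t := by
  unfold sideR delta
  apply iSup₂_le
  intro k hk
  rcases le_total k (rho u) with h | h
  · calc (k : ℕ∞) ≤ (rho u : ℕ∞) := by exact_mod_cast h
      _ ≤ _ := le_self_add
  · have e : rho u + (k - rho u) = k := by omega
    have hj : SimonCong (rho u + (k - rho u)) (u ++ v) (u ++ (v ++ t)) := by
      rw [e, ← List.append_assoc]
      exact hk
    have hmem : (k - rho u) ∈ {k : ℕ | SimonCong k v (v ++ t)} :=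
      key (mreduced_rho u) hj
    have hle : ((k - rho u : ℕ) : ℕ∞) ≤ ⨆ k ∈ {k : ℕ | SimonCong k v (v ++ t)}, (k : ℕ∞) :=
      le_biSup _ hmem
    calc (k : ℕ∞) = (rho u : ℕ∞) + ((k - rho u : ℕ) : ℕ∞) := by
          rw [← Nat.cast_add]
          exact_mod_cast (by omega : k = rho u + (k - rho u))
      _ ≤ _ := add_le_add_right hle _

lemma sideL_eq (t u : List A) : sideL t u = sideR u.reverse t.reverse := by
  unfold sideL sideR
  rw [← delta_rev (t ++ u) u, List.reverse_append, delta_comm]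

end Stmt14Aux

theorem stmt14 {A : Type*} [Fintype A] [Nonempty A] (u v t : List A) :
    sideR (u ++ v) t ≤ (rho u : ℕ∞) + sideR v t ∧
    sideL t (u ++ v) ≤ (rho v : ℕ∞) + sideL t u := by
  constructor
  · exact Stmt14Aux.sideR_append_le u v t
  · rw [Stmt14Aux.sideL_eq, Stmt14Aux.sideL_eq, List.reverse_append]
    calc sideR (v.reverse ++ u.reverse) t.reverse
        ≤ (rho v.reverse : ℕ∞) + sideR u.reverse t.reverse :=
          Stmt14Aux.sideR_append_le v.reverse u.reverse t.reverse
      _ = (rho v : ℕ∞) + sideR u.reverse t.reverse := by rw [Stmt14Aux.rho_rev]
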